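/- arXiv:1609.05958 — 5 statements merged into one kernel-verified Lean document; each statement's English description precedes it below -/
import Mathlib

section
/- Let K be a finite field of cardinality q and characteristic p, let n ≥ 0 be a natural number, and let F be a polynomial in K[x_0, …, x_n] of total degree at most n+1. Let N be the number of points x ∈ K^{n+1} with F(x) = 0, and let c ∈ K be the coefficient of the monomial (x_0 x_1 ⋯ x_n)^{q−1} in F^{q−1}. Then the image of N in K equals (−1)^n · c; equivalently, N ≡ (−1)^n · c (mod p). -/
open MvPolynomial Finset

lemma sum_pow_card_sub_one_eq_neg_one (K : Type*) [Field K] [Fintype K] :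
    ∑ x : K, x ^ (Fintype.card K - 1) = -1 := by
  classical
  have hq : 1 < Fintype.card K := Fintype.one_lt_card
  have h0 : (0 : K) ^ (Fintype.card K - 1) = 0 := zero_pow (by omega)
  let φ : Kˣ ↪ K := ⟨fun x ↦ x, fun _ _ h => Units.ext h⟩
  have hmap : univ.map φ = univ \ {0} := by
    ext x
    simp only [mem_map, mem_univ, Function.Embedding.coeFn_mk, true_and, mem_sdiff,
      mem_singleton, φ]
    exact isUnit_iff_ne_zero
  have h1 : ∑ x : K, x ^ (Fintype.card K - 1)
      = ∑ x ∈ univ \ {(0 : K)}, x ^ (Fintype.card K - 1) := by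
    rw [Finset.sum_sdiff_eq_sub (by simp), Finset.sum_singleton, h0, sub_zero]
  rw [h1, ← hmap, Finset.sum_map]
  have := FiniteField.sum_pow_units K (Fintype.card K - 1)
  rw [if_pos dvd_rfl] at this
  exact this

/-- Fulton trace formula / mod-p point count: for a finite field `K` of cardinality `q`
and characteristic `p`, and a polynomial `F` in `n+1` variables of total degree at most
`n+1`, the number `N` of affine zeros of `F` satisfies `(N : K) = (-1)^n * c`, where `c`
is the coefficient of `(x_0 ⋯ x_n)^(q-1)` in `F^(q-1)`. -/
theorem affine_point_count_eq_coeff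
    {K : Type*} [Field K] [Fintype K] (p : ℕ) [CharP K p]
    (n : ℕ) (F : MvPolynomial (Fin (n + 1)) K)
    (hdeg : F.totalDegree ≤ n + 1) :
    ((Nat.card {x : Fin (n + 1) → K // eval x F = 0} : K)) =
      (-1 : K) ^ n *
        coeff (Finsupp.equivFunOnFinite.symm fun _ : Fin (n + 1) => Fintype.card K - 1)
          (F ^ (Fintype.card K - 1)) := by
  classical
  set q := Fintype.card K with hq
  have hq1 : 1 < q := Fintype.one_lt_card
  set G := F ^ (q - 1) with hG
  set c : Fin (n + 1) →₀ ℕ := Finsupp.equivFunOnFinite.symm fun _ : Fin (n + 1) => q - 1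
    with hc
  have hci : ∀ i, c i = q - 1 := fun i => rfl
  -- Step 1: indicator identity
  have hind : ∀ x : Fin (n + 1) → K,
      1 - eval x G = if eval x F = 0 then 1 else 0 := by
    intro x
    rw [hG, map_pow]
    split_ifs with h
    · rw [h, zero_pow (by omega), sub_zero]
    · rw [FiniteField.pow_card_sub_one_eq_one _ h, sub_self]
  -- Step 2: N = ∑ (1 - eval x G)
  have hN : ((Nat.card {x : Fin (n + 1) → K // eval x F = 0} : K))
      = ∑ x : Fin (n + 1) → K, (1 - eval x G) := by
    rw [Nat.card_eq_fintype_card, Fintype.card_subtype]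
    simp only [hind, Finset.sum_boole]
  -- Step 3: compute S = ∑ eval x G
  have hdegG : ∀ d ∈ G.support, ∑ i, d i ≤ (q - 1) * (n + 1) := by
    intro d hd
    have h1 : (d.sum fun _ e => e) ≤ G.totalDegree := le_totalDegree hd
    have h2 : G.totalDegree ≤ (q - 1) * F.totalDegree := totalDegree_pow F (q - 1)
    have h3 : (d.sum fun _ e => e) = ∑ i, d i :=
      Finsupp.sum_fintype d (fun _ e => e) fun _ => rfl
    calc ∑ i, d i ≤ (q - 1) * F.totalDegree := by omega
      _ ≤ (q - 1) * (n + 1) := Nat.mul_le_mul_left _ hdeg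
  have hS : ∑ x : Fin (n + 1) → K, eval x G = coeff c G * (-1) ^ (n + 1) := by
    calc ∑ x : Fin (n + 1) → K, eval x G
        = ∑ x : Fin (n + 1) → K, ∑ d ∈ G.support, coeff d G * ∏ i, x i ^ d i := by
          simp only [eval_eq']
      _ = ∑ d ∈ G.support, ∑ x : Fin (n + 1) → K, coeff d G * ∏ i, x i ^ d i :=
          Finset.sum_comm
      _ = ∑ d ∈ G.support, coeff d G * ∏ i, ∑ a : K, a ^ d i := by
          refine Finset.sum_congr rfl fun d _ => ?_
          rw [← Finset.mul_sum, Fintype.prod_sum fun i (a : K) => a ^ d i]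
      _ = coeff c G * ∏ i : Fin (n + 1), ∑ a : K, a ^ c i := by
          refine Finset.sum_eq_single c (fun d hd hdc => ?_) (fun hcs => ?_)
          · -- off-diagonal terms vanish
            obtain ⟨i, hi⟩ : ∃ i, d i < q - 1 := by
              by_contra hcon
              push_neg at hcon
              obtain ⟨j, hj⟩ : ∃ j, d j ≠ q - 1 := by
                by_contra hall
                push_neg at hall
                exact hdc (Finsupp.ext fun i => by rw [hall i, hci i])
              have hlt : (q - 1) * (n + 1) < ∑ i, d i := by
                calc (q - 1) * (n + 1) = ∑ _i : Fin (n + 1), (q - 1) := by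
                      simp [Finset.sum_const, mul_comm]
                  _ < ∑ i, d i :=
                      Finset.sum_lt_sum (fun i _ => hcon i)
                        ⟨j, Finset.mem_univ j, lt_of_le_of_ne (hcon j) (Ne.symm hj)⟩
              have := hdegG d hd
              omega
            rw [Finset.prod_eq_zero (Finset.mem_univ i)
              (FiniteField.sum_pow_lt_card_sub_one K (d i) hi), mul_zero]
          · rw [notMem_support_iff.mp hcs, zero_mul]
      _ = coeff c G * (-1) ^ (n + 1) := by
          congr 1
          calc ∏ i : Fin (n + 1), ∑ a : K, a ^ c i
              = ∏ _i : Fin (n + 1), (-1 : K) := by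
                refine Finset.prod_congr rfl fun i _ => ?_
                rw [hci i]
                exact sum_pow_card_sub_one_eq_neg_one K
            _ = (-1) ^ (n + 1) := by simp
  -- Conclude
  rw [hN, Finset.sum_sub_distrib, hS, Finset.sum_const, Finset.card_univ, nsmul_eq_mul]
  have hcard0 : ((Fintype.card (Fin (n + 1) → K) : K)) = 0 := by
    rw [Fintype.card_fun, Fintype.card_fin, Nat.cast_pow, ← hq,
      FiniteField.cast_card_eq_zero, zero_pow (by omega)]
  rw [hcard0, zero_mul, zero_sub, pow_succ]
  ring
end

section
/- Let K be a finite field of cardinality q and characteristic p, let n ≥ 0, and let F ∈ K[x_0, …, x_n] be homogeneous of degree n+1. Let M be the number of projective zeros of F in ℙ(K^{n+1}), and let c ∈ K be the coefficient of the monomial (x_0 x_1 ⋯ x_n)^{q−1} in F^{q−1}. Then the image of M in K equals 1 − (−1)^n · c; equivalently, M ≡ 1 − (−1)^n · c (mod p). -/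
open MvPolynomial Finset

section Aux

variable {K : Type*} [Field K] [Fintype K]

local notation "q" => Fintype.card K

lemma degree_eq_sum_univ {m : ℕ} (d : Fin m →₀ ℕ) : d.degree = ∑ i, d i := by
  rw [Finsupp.degree]
  exact Finset.sum_subset (Finset.subset_univ _)
    (fun i _ h => Finsupp.notMem_support_iff.mp h)

omit [Fintype K] in
lemma eval_smul_homog {m k : ℕ} {F : MvPolynomial (Fin m) K} (hF : F.IsHomogeneous k)
    (a : K) (v : Fin m → K) : eval (a • v) F = a ^ k * eval v F := by
  classical
  rw [eval_eq', eval_eq', Finset.mul_sum]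
  apply Finset.sum_congr rfl
  intro d hd
  have hdeg : d.degree = k := by
    by_contra h
    exact (mem_support_iff.mp hd) (hF.coeff_eq_zero h)
  have : ∏ i, (a • v) i ^ d i = a ^ k * ∏ i, v i ^ d i := by
    simp only [Pi.smul_apply, smul_eq_mul, mul_pow]
    rw [Finset.prod_mul_distrib, Finset.prod_pow_eq_pow_sum, ← degree_eq_sum_univ, hdeg]
  rw [this]; ring

lemma sum_pow_K (a : ℕ) (ha : a ≠ 0) :
    (∑ t : K, t ^ a) = if q - 1 ∣ a then -1 else 0 := by
  classical
  let φ : Kˣ ↪ K := ⟨fun x ↦ x, fun _ _ h => Units.ext h⟩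
  have huniv : univ.map φ = univ \ {0} := by
    ext x
    simp only [mem_map, mem_univ, Function.Embedding.coeFn_mk, true_and, mem_sdiff,
      mem_singleton, φ]
    exact isUnit_iff_ne_zero
  calc
    ∑ t : K, t ^ a = ∑ t ∈ univ \ {(0 : K)}, t ^ a := by
      rw [← Finset.sum_sdiff (Finset.subset_univ ({0} : Finset K)), Finset.sum_singleton,
        zero_pow ha, add_zero]
    _ = ∑ x : Kˣ, (x ^ a : K) := by simp [φ, ← huniv, univ.sum_map φ]; rfl
    _ = if q - 1 ∣ a then -1 else 0 := FiniteField.sum_pow_units K a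

end Aux

open Projectivization

/-- For a homogeneous polynomial `F` of degree `n+1` over a finite field `K` of
cardinality `q` and characteristic `p`, the number `M` of projective zeros of `F`
satisfies `(M : K) = 1 - (-1)^n * c`, where `c` is the coefficient of
`(x_0 ⋯ x_n)^(q-1)` in `F^(q-1)`. -/
theorem projective_point_count_eq_coeff
    {K : Type*} [Field K] [Fintype K] (p : ℕ) [CharP K p]
    (n : ℕ) (F : MvPolynomial (Fin (n + 1)) K) (hF : F.IsHomogeneous (n + 1)) :
    ((Nat.card {P : Projectivization K (Fin (n + 1) → K) //
        ∀ (v : Fin (n + 1) → K) (hv : v ≠ 0),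
          Projectivization.mk K v hv = P → eval v F = 0} : K)) =
      1 - (-1 : K) ^ n *
        coeff (Finsupp.equivFunOnFinite.symm fun _ : Fin (n + 1) => Fintype.card K - 1)
          (F ^ (Fintype.card K - 1)) := by
  classical
  set q := Fintype.card K with hq
  have hq1 : 1 < q := Fintype.one_lt_card
  have hq0 : (q : K) = 0 := FiniteField.cast_card_eq_zero K
  -- notation
  set d₀ : Fin (n+1) →₀ ℕ := Finsupp.equivFunOnFinite.symm fun _ : Fin (n + 1) => q - 1 with hd₀
  set c : K := coeff d₀ (F ^ (q - 1)) with hc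
  set T := {P : Projectivization K (Fin (n + 1) → K) //
        ∀ (v : Fin (n + 1) → K) (hv : v ≠ 0),
          Projectivization.mk K v hv = P → eval v F = 0} with hT
  set S := {v : Fin (n+1) → K // v ≠ 0 ∧ eval v F = 0} with hS
  -- eval at 0 is 0
  have heval0 : eval (0 : Fin (n+1) → K) F = 0 := by
    have := eval_smul_homog hF (0 : K) (0 : Fin (n+1) → K)
    simpa using this
  -- counting: card S = card T * (q - 1)
  have hST : Nat.card S = Nat.card T * (q - 1) := by
    have : Nat.card S = Nat.card (T × Kˣ) := by
      refine (Nat.card_eq_of_bijective (fun Pa : T × Kˣ =>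
        (⟨(Pa.2 : K) • Pa.1.1.rep,
          smul_ne_zero (Units.ne_zero _) Pa.1.1.rep_nonzero,
          by
            rw [eval_smul_homog hF]
            rw [Pa.1.2 Pa.1.1.rep Pa.1.1.rep_nonzero (Projectivization.mk_rep _), mul_zero]⟩ : S))
        ⟨?_, ?_⟩).symm
      · rintro ⟨P, a⟩ ⟨Q, b⟩ hab
        simp only [Subtype.mk_eq_mk] at hab
        have hPQ : P.1 = Q.1 := by
          have h1 : Projectivization.mk K ((a : K) • P.1.rep)
              (smul_ne_zero (Units.ne_zero _) P.1.rep_nonzero) = P.1 := by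
            rw [← Projectivization.mk_rep P.1]
            rw [Projectivization.mk_eq_mk_iff]
            exact ⟨a, by simp [Units.smul_def]⟩
          have h2 : Projectivization.mk K ((b : K) • Q.1.rep)
              (smul_ne_zero (Units.ne_zero _) Q.1.rep_nonzero) = Q.1 := by
            rw [← Projectivization.mk_rep Q.1]
            rw [Projectivization.mk_eq_mk_iff]
            exact ⟨b, by simp [Units.smul_def]⟩
          rw [← h1, ← h2]
          congr 1
        have hrep : P.1.rep = Q.1.rep := by rw [hPQ]
        rw [hrep] at hab
        have hab' : (a : K) = (b : K) :=
          smul_left_injective K Q.1.rep_nonzero hab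
        exact Prod.ext (Subtype.ext hPQ) (Units.ext hab')
      · rintro ⟨v, hv0, hv⟩
        obtain ⟨a, ha⟩ := Projectivization.exists_smul_eq_mk_rep K v hv0
        refine ⟨⟨⟨Projectivization.mk K v hv0, ?_⟩, a⁻¹⟩, ?_⟩
        · intro w hw hmk
          rw [Projectivization.mk_eq_mk_iff] at hmk
          obtain ⟨b, hb⟩ := hmk
          rw [← hb, Units.smul_def, eval_smul_homog hF, hv, mul_zero]
        · apply Subtype.ext
          show ((a⁻¹ : Kˣ) : K) • (Projectivization.mk K v hv0).rep = v
          rw [← ha, ← Units.smul_def, smul_smul, inv_mul_cancel, one_smul]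
    rw [this, Nat.card_prod, Nat.card_eq_fintype_card (α := Kˣ), Fintype.card_units]
  -- N = card S + 1
  have hNS : Nat.card {v : Fin (n+1) → K // eval v F = 0} = Nat.card S + 1 := by
    have : Nat.card {v : Fin (n+1) → K // eval v F = 0} = Nat.card (Option S) := by
      refine (Nat.card_eq_of_bijective (fun x : Option S =>
        (Option.elim x ⟨0, heval0⟩ (fun v => ⟨v.1, v.2.2⟩) :
          {v : Fin (n+1) → K // eval v F = 0})) ⟨?_, ?_⟩).symm
      · rintro (_ | ⟨v, hv0, hv⟩) (_ | ⟨w, hw0, hw⟩) h <;>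
          simp only [Option.elim, Subtype.mk_eq_mk] at h
        · rfl
        · exact absurd h.symm hw0
        · exact absurd h hv0
        · simp [h]
      · rintro ⟨v, hv⟩
        by_cases hv0 : v = 0
        · exact ⟨none, by simp [Option.elim, hv0]⟩
        · exact ⟨some ⟨v, hv0, hv⟩, rfl⟩
    rw [this]
    simp [Nat.card_eq_fintype_card]
  -- the key character-sum computation
  set G : MvPolynomial (Fin (n+1)) K := F ^ (q - 1) with hG
  have hGhom : G.IsHomogeneous ((n + 1) * (q - 1)) := hF.pow _
  have hsum : ∑ v : Fin (n+1) → K, eval v G = (-1 : K) ^ (n + 1) * c := by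
    calc ∑ v : Fin (n+1) → K, eval v G
        = ∑ v : Fin (n+1) → K, ∑ d ∈ G.support, coeff d G * ∏ i, v i ^ d i := by
          simp only [eval_eq']
      _ = ∑ d ∈ G.support, ∑ v : Fin (n+1) → K, coeff d G * ∏ i, v i ^ d i :=
          Finset.sum_comm
      _ = ∑ d ∈ G.support, coeff d G * ∏ i, ∑ t : K, t ^ d i := by
          refine Finset.sum_congr rfl fun d _ => ?_
          rw [← Finset.mul_sum]
          congr 1
          rw [Finset.prod_univ_sum]
          rw [← Fintype.piFinset_univ]
      _ = ∑ d ∈ G.support, coeff d G * (if d = d₀ then (-1 : K) ^ (n + 1) else 0) := by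
          refine Finset.sum_congr rfl fun d hd => ?_
          congr 1
          have hdeg : d.degree = (n + 1) * (q - 1) := by
            by_contra h
            exact (mem_support_iff.mp hd) (hGhom.coeff_eq_zero h)
          by_cases hdd : d = d₀
          · subst hdd
            rw [if_pos rfl]
            have hco : ∀ i : Fin (n+1), d₀ i = q - 1 := fun i => rfl
            calc ∏ i, ∑ t : K, t ^ d₀ i = ∏ i : Fin (n+1), (-1 : K) := by
                  refine Finset.prod_congr rfl fun i _ => ?_
                  rw [hco i, sum_pow_K _ (by omega), if_pos dvd_rfl]
              _ = (-1 : K) ^ (n + 1) := by simp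
          · rw [if_neg hdd]
            -- find a bad index
            have : ∃ i, d i = 0 ∨ ¬ (q - 1) ∣ d i := by
              by_contra h
              push_neg at h
              have hge : ∀ i, q - 1 ≤ d i := fun i =>
                Nat.le_of_dvd (Nat.pos_of_ne_zero (h i).1) (h i).2
              obtain ⟨j, hj⟩ : ∃ j, d j ≠ q - 1 := by
                by_contra h'
                push_neg at h'
                exact hdd (Finsupp.ext h')
              have hj2 : 2 * (q - 1) ≤ d j := by
                have hdj0 : d j ≠ 0 := (h j).1
                rcases (h j).2 with ⟨k, hk⟩
                have hk2 : 2 ≤ k := by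
                  rcases k with _ | _ | k <;> omega
                calc 2 * (q - 1) = (q-1) * 2 := by ring
                  _ ≤ (q-1) * k := Nat.mul_le_mul_left _ hk2
                  _ = d j := hk.symm
              have hsum' : ∑ i, d i = (n + 1) * (q - 1) := by
                rw [← degree_eq_sum_univ, hdeg]
              have hlb : n * (q - 1) + 2 * (q - 1) ≤ ∑ i, d i := by
                rw [← Finset.sum_erase_add _ _ (Finset.mem_univ j)]
                have h1 : n * (q - 1) ≤ ∑ i ∈ univ.erase j, d i := by
                  calc n * (q - 1) = (univ.erase j).card * (q - 1) := by
                        rw [Finset.card_erase_of_mem (Finset.mem_univ j), Finset.card_univ]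
                        simp
                    _ ≤ ∑ i ∈ univ.erase j, d i := by
                        rw [← Finset.sum_const_nat fun i _ => rfl]
                        exact Finset.sum_le_sum fun i _ => hge i
                omega
              rw [hsum'] at hlb
              have : 0 < q - 1 := by omega
              nlinarith
            obtain ⟨i, hi⟩ := this
            refine Finset.prod_eq_zero (Finset.mem_univ i) ?_
            rcases hi with hi | hi
            · rw [hi]
              simp [hq0]
            · have hdi : d i ≠ 0 := fun h => hi (h ▸ dvd_zero _)
              rw [sum_pow_K _ hdi, if_neg hi]
      _ = (-1 : K) ^ (n + 1) * c := by
          simp only [mul_ite, mul_zero]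
          rw [Finset.sum_ite_eq' G.support d₀ (fun d => coeff d G * (-1 : K)^(n+1))]
          by_cases hmem : d₀ ∈ G.support
          · rw [if_pos hmem, hc, mul_comm]
          · rw [if_neg hmem, hc, notMem_support_iff.mp hmem, mul_zero]
  -- cast N to K
  have hNcast : ((Nat.card {v : Fin (n+1) → K // eval v F = 0} : K)) =
      (-1 : K) ^ n * c := by
    have hcard : Nat.card {v : Fin (n+1) → K // eval v F = 0} =
        (univ.filter fun v : Fin (n+1) → K => eval v F = 0).card := by
      rw [Nat.card_eq_fintype_card, Fintype.card_subtype]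
    rw [hcard]
    have : ((univ.filter fun v : Fin (n+1) → K => eval v F = 0).card : K) =
        ∑ v : Fin (n+1) → K, (1 - eval v G) := by
      rw [Finset.card_filter, Nat.cast_sum]
      refine Finset.sum_congr rfl fun v _ => ?_
      by_cases hv : eval v F = 0
      · rw [if_pos hv, hG, map_pow, hv, zero_pow (by omega), sub_zero, Nat.cast_one]
      · rw [if_neg hv, hG, map_pow, FiniteField.pow_card_sub_one_eq_one _ hv, sub_self,
          Nat.cast_zero]
    rw [this, Finset.sum_sub_distrib, hsum, Finset.sum_const, Finset.card_univ,
      nsmul_eq_mul, mul_one]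
    have h0 : ((Fintype.card (Fin (n+1) → K)) : K) = 0 := by
      rw [Fintype.card_fun, Fintype.card_fin, Nat.cast_pow, hq0, zero_pow (by omega)]
    rw [h0, pow_succ]
    ring
  have hqm1 : ((q - 1 : ℕ) : K) = -1 := by
    rw [Nat.cast_sub (by omega), hq0, Nat.cast_one, zero_sub]
  have hfin : ((Nat.card T : K)) * (-1) + 1 = (-1 : K) ^ n * c := by
    rw [← hNcast, hNS, hST, Nat.cast_add, Nat.cast_mul, hqm1, Nat.cast_one]
  linear_combination -hfin
end

section
/- Let K be a finite field of cardinality q and characteristic p, let n ≥ 0, and let F ∈ K[x_0, …, x_n] be homogeneous of degree n+1, defining a degree-(n+1) hypersurface X in ℙ^n over K. Then the number of projective zeros of F in ℙ(K^{n+1}) is NOT congruent to 1 modulo p if and only if the coefficient of the monomial (x_0 x_1 ⋯ x_n)^{q−1} in F^{q−1} is nonzero in K. -/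
open MvPolynomial

section AuxLemmas

variable {K : Type*} [Field K] [Fintype K]

private lemma aux_sum_pow_card_sub_one :
    ∑ a : K, a ^ (Fintype.card K - 1) = -1 := by
  classical
  have hq1 : 1 < Fintype.card K := Fintype.one_lt_card
  have h : ∀ a : K, a ^ (Fintype.card K - 1) = 1 - if a = 0 then 1 else 0 := by
    intro a
    by_cases ha : a = 0
    · simp [ha, zero_pow (by omega : Fintype.card K - 1 ≠ 0)]
    · simp [ha, FiniteField.pow_card_sub_one_eq_one a ha]
  rw [Fintype.sum_congr _ _ h, Finset.sum_sub_distrib, Finset.sum_boole,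
    Finset.sum_const, Finset.card_univ, nsmul_eq_mul, mul_one,
    FiniteField.cast_card_eq_zero]
  have hf : (Finset.filter (fun x : K => x = 0) Finset.univ) = {0} := by
    ext x; simp
  rw [hf, Finset.card_singleton, Nat.cast_one, zero_sub]

private lemma aux_eval_smul {σ : Type*} [Fintype σ] {m : ℕ} {F : MvPolynomial σ K}
    (hF : F.IsHomogeneous m) (c : K) (x : σ → K) :
    eval (c • x) F = c ^ m * eval x F := by
  classical
  rw [eval_eq', eval_eq', Finset.mul_sum]
  refine Finset.sum_congr rfl fun d hd => ?_
  have hdeg : ∑ i, d i = m := by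
    have h1 : Finsupp.weight 1 d = m := hF (mem_support_iff.mp hd)
    rw [show Finsupp.weight 1 d = Finsupp.degree d from (DFunLike.congr_fun Finsupp.degree_eq_weight_one d).symm] at h1
    rw [← h1, Finsupp.degree_apply]
    exact (Finset.sum_subset (Finset.subset_univ _) fun i _ hi =>
      Finsupp.notMem_support_iff.mp hi).symm
  calc (coeff d F) * ∏ i, (c • x) i ^ d i
      = coeff d F * ∏ i, (c ^ d i * x i ^ d i) := by
        simp only [Pi.smul_apply, smul_eq_mul, mul_pow]
    _ = c ^ m * (coeff d F * ∏ i, x i ^ d i) := by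
        rw [Finset.prod_mul_distrib, Finset.prod_pow_eq_pow_sum, hdeg]; ring

end AuxLemmas

/-- Criterion for a degree-(n+1) hypersurface `X = V(F)` in `ℙ^n` over a finite field
`K` of cardinality `q` and characteristic `p`: `|X(K)| ≢ 1 (mod p)` if and only if the
coefficient of `(x_0 ⋯ x_n)^(q-1)` in `F^(q-1)` is nonzero. -/
theorem projective_point_count_not_modeq_one_iff_coeff_ne_zero
    {K : Type*} [Field K] [Fintype K] (p : ℕ) [CharP K p]
    (n : ℕ) (F : MvPolynomial (Fin (n + 1)) K) (hF : F.IsHomogeneous (n + 1)) :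
    ¬ (Nat.card {P : Projectivization K (Fin (n + 1) → K) //
        ∀ (v : Fin (n + 1) → K) (hv : v ≠ 0),
          Projectivization.mk K v hv = P → eval v F = 0} ≡ 1 [MOD p]) ↔
      coeff (Finsupp.equivFunOnFinite.symm fun _ : Fin (n + 1) => Fintype.card K - 1)
          (F ^ (Fintype.card K - 1)) ≠ 0 := by
  classical
  set q := Fintype.card K with hqdef
  have hq1 : 1 < q := Fintype.one_lt_card
  set d₀ : (Fin (n + 1)) →₀ ℕ := Finsupp.equivFunOnFinite.symm fun _ : Fin (n + 1) => q - 1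
    with hd₀def
  have hd₀ : ∀ i, d₀ i = q - 1 := fun i => rfl
  set G : MvPolynomial (Fin (n + 1)) K := F ^ (q - 1) with hGdef
  set c : K := coeff d₀ G with hcdef
  have hG : G.IsHomogeneous ((n + 1) * (q - 1)) := hF.pow _
  -- Step 1: the full exponential sum equals (-1)^(n+1) * c
  have key1 : ∑ x : Fin (n + 1) → K, eval x G = (-1) ^ (n + 1) * c := by
    calc ∑ x : Fin (n + 1) → K, eval x G
        = ∑ x : Fin (n + 1) → K, ∑ d ∈ G.support, coeff d G * ∏ i, x i ^ d i := by
          simp only [eval_eq']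
      _ = ∑ d ∈ G.support, ∑ x : Fin (n + 1) → K, coeff d G * ∏ i, x i ^ d i :=
          Finset.sum_comm
      _ = ∑ d ∈ G.support, coeff d G * ∏ i, ∑ a : K, a ^ d i := by
          refine Finset.sum_congr rfl fun d _ => ?_
          rw [← Finset.mul_sum, Fintype.prod_sum fun i (a : K) => a ^ d i]
      _ = coeff d₀ G * ∏ i, ∑ a : K, a ^ d₀ i := by
          refine Finset.sum_eq_single d₀ (fun d hd hne => ?_) (fun hd => ?_)
          · -- d ≠ d₀ : some exponent is < q - 1, killing the inner sum
            have hdeg : ∑ i, d i = (n + 1) * (q - 1) := by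
              have h1 : Finsupp.weight 1 d = (n + 1) * (q - 1) :=
                hG (mem_support_iff.mp hd)
              rw [show Finsupp.weight 1 d = Finsupp.degree d from (DFunLike.congr_fun Finsupp.degree_eq_weight_one d).symm] at h1
              rw [← h1, Finsupp.degree_apply]
              exact (Finset.sum_subset (Finset.subset_univ _) fun i _ hi =>
                Finsupp.notMem_support_iff.mp hi).symm
            have hex : ∃ i, d i < q - 1 := by
              by_contra hforall
              push_neg at hforall
              have hall : ∀ i, d i = q - 1 := by
                by_contra hne2
                push_neg at hne2
                obtain ⟨i, hi⟩ := hne2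
                have hlt : q - 1 < d i := lt_of_le_of_ne (hforall i) (Ne.symm hi)
                have : ∑ _i : Fin (n + 1), (q - 1) < ∑ i, d i :=
                  Finset.sum_lt_sum (fun j _ => hforall j) ⟨i, Finset.mem_univ i, hlt⟩
                rw [hdeg, Finset.sum_const, Finset.card_univ, Fintype.card_fin,
                  smul_eq_mul] at this
                omega
              exact hne (Finsupp.ext fun i => (hall i).trans (hd₀ i).symm)
            obtain ⟨i, hi⟩ := hex
            have : ∏ j, ∑ a : K, a ^ d j = 0 :=
              Finset.prod_eq_zero (Finset.mem_univ i)
                (FiniteField.sum_pow_lt_card_sub_one K (d i) hi)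
            rw [this, mul_zero]
          · rw [MvPolynomial.notMem_support_iff.mp hd, zero_mul]
      _ = (-1) ^ (n + 1) * c := by
          rw [← hcdef]
          have h2 : ∀ i : Fin (n + 1), ∑ a : K, a ^ d₀ i = -1 := fun i => by
            rw [hd₀ i]; exact aux_sum_pow_card_sub_one
          rw [Finset.prod_congr rfl fun i _ => h2 i, Finset.prod_const,
            Finset.card_univ, Fintype.card_fin, mul_comm]
  -- Step 2: the sum equals minus the number of affine zeros
  have key2 : ∑ x : Fin (n + 1) → K, eval x G
      = -(Fintype.card {x : Fin (n + 1) → K // eval x F = 0} : K) := by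
    have hpt : ∀ x : Fin (n + 1) → K,
        eval x G = 1 - if eval x F = 0 then 1 else 0 := by
      intro x
      rw [hGdef, map_pow]
      by_cases h : eval x F = 0
      · simp [h, zero_pow (by omega : q - 1 ≠ 0)]
      · simp [h, hqdef, FiniteField.pow_card_sub_one_eq_one _ h]
    rw [Fintype.sum_congr _ _ hpt, Finset.sum_sub_distrib, Finset.sum_boole,
      Finset.sum_const, Finset.card_univ, nsmul_eq_mul, mul_one]
    have hcard0 : ((Fintype.card (Fin (n + 1) → K) : K)) = 0 := by
      rw [Fintype.card_fun, Fintype.card_fin, Nat.cast_pow, ← hqdef,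
        FiniteField.cast_card_eq_zero, zero_pow (Nat.succ_ne_zero n)]
    rw [hcard0, zero_sub, Fintype.card_subtype]
  -- Step 3: counting
  set T := {P : Projectivization K (Fin (n + 1) → K) //
      ∀ (v : Fin (n + 1) → K) (hv : v ≠ 0),
        Projectivization.mk K v hv = P → eval v F = 0} with hTdef
  set S := {x : Fin (n + 1) → K // x ≠ 0 ∧ eval x F = 0} with hSdef
  have hg : ∀ (u : Kˣ) (P : T), ((u : K) • (P : Projectivization K (Fin (n+1) → K)).rep ≠ 0 ∧
      eval ((u : K) • (P : Projectivization K (Fin (n+1) → K)).rep) F = 0) := by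
    rintro u ⟨P, hP⟩
    constructor
    · exact smul_ne_zero u.ne_zero (Projectivization.rep_nonzero P)
    · rw [aux_eval_smul hF, hP P.rep (Projectivization.rep_nonzero P)
        (Projectivization.mk_rep P), mul_zero]
  let g : Kˣ × T → S := fun y =>
    ⟨(y.1 : K) • (y.2 : T).1.rep, hg y.1 y.2⟩
  have hg_bij : Function.Bijective g := by
    constructor
    · rintro ⟨u, P, hP⟩ ⟨u', P', hP'⟩ h
      have hvec : (u : K) • P.rep = (u' : K) • P'.rep := congrArg Subtype.val h
      have hPP' : P = P' := by
        have h1 : Projectivization.mk K ((u : K) • P.rep)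
            (smul_ne_zero u.ne_zero (Projectivization.rep_nonzero P)) = P := by
          rw [show Projectivization.mk K ((u : K) • P.rep)
              (smul_ne_zero u.ne_zero (Projectivization.rep_nonzero P))
              = Projectivization.mk K P.rep (Projectivization.rep_nonzero P) from
            (Projectivization.mk_eq_mk_iff K _ _ _ _).mpr ⟨u, rfl⟩,
            Projectivization.mk_rep]
        have h2 : Projectivization.mk K ((u' : K) • P'.rep)
            (smul_ne_zero u'.ne_zero (Projectivization.rep_nonzero P')) = P' := by
          rw [show Projectivization.mk K ((u' : K) • P'.rep)
              (smul_ne_zero u'.ne_zero (Projectivization.rep_nonzero P'))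
              = Projectivization.mk K P'.rep (Projectivization.rep_nonzero P') from
            (Projectivization.mk_eq_mk_iff K _ _ _ _).mpr ⟨u', rfl⟩,
            Projectivization.mk_rep]
        rw [← h1, ← h2]
        congr 1
      subst hPP'
      have hrep : P.rep ≠ 0 := Projectivization.rep_nonzero P
      obtain ⟨i, hi⟩ : ∃ i, P.rep i ≠ 0 := by
        by_contra hcon
        push_neg at hcon
        exact hrep (funext hcon)
      have hci := congrFun hvec i
      simp only [Pi.smul_apply, smul_eq_mul] at hci
      have huu' : u = u' := Units.ext (mul_right_cancel₀ hi hci)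
      subst huu'
      rfl
    · rintro ⟨v, hv0, hv⟩
      have hP : ∀ (w : Fin (n + 1) → K) (hw : w ≠ 0),
          Projectivization.mk K w hw = Projectivization.mk K v hv0 → eval w F = 0 := by
        intro w hw hmk
        obtain ⟨a, ha⟩ := (Projectivization.mk_eq_mk_iff K w v hw hv0).mp hmk
        rw [← ha, Units.smul_def, aux_eval_smul hF, hv, mul_zero]
      set P : Projectivization K (Fin (n + 1) → K) := Projectivization.mk K v hv0 with hPdef
      obtain ⟨a, ha⟩ := (Projectivization.mk_eq_mk_iff K v P.rep hv0
        (Projectivization.rep_nonzero P)).mp (Projectivization.mk_rep P).symm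
      refine ⟨⟨a, ⟨P, hP⟩⟩, ?_⟩
      apply Subtype.ext
      show (a : K) • P.rep = v
      rw [← Units.smul_def, ha]
  set N := Nat.card T with hNdef
  have hcardS : Fintype.card S = (q - 1) * N := by
    rw [← Nat.card_eq_fintype_card, ← Nat.card_eq_of_bijective g hg_bij,
      Nat.card_prod, hNdef, Nat.card_eq_fintype_card, Fintype.card_units, hqdef]
  have h0 : eval (0 : Fin (n + 1) → K) F = 0 := by
    have h00 := aux_eval_smul hF (0 : K) (0 : Fin (n + 1) → K)
    rwa [smul_zero, zero_pow (Nat.succ_ne_zero n), zero_mul] at h00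
  have hZ : Fintype.card {x : Fin (n + 1) → K // eval x F = 0}
      = 1 + Fintype.card S := by
    rw [Fintype.card_subtype, Fintype.card_subtype]
    have hins : Finset.univ.filter (fun x : Fin (n + 1) → K => eval x F = 0)
        = insert 0 (Finset.univ.filter fun x : Fin (n + 1) → K => x ≠ 0 ∧ eval x F = 0) := by
      ext x
      simp only [Finset.mem_filter, Finset.mem_univ, true_and, Finset.mem_insert]
      constructor
      · intro hx
        by_cases hx0 : x = 0
        · exact Or.inl hx0
        · exact Or.inr ⟨hx0, hx⟩
      · rintro (rfl | ⟨_, hx⟩)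
        · exact h0
        · exact hx
    rw [hins, Finset.card_insert_of_notMem (by simp)]
    omega
  -- assemble: (N : K) - 1 = (-1)^(n+1) * c
  have hNK : ((N : K) - 1) = (-1) ^ (n + 1) * c := by
    have h1 : (-(Fintype.card {x : Fin (n + 1) → K // eval x F = 0} : K))
        = (-1) ^ (n + 1) * c := by rw [← key2, key1]
    rw [hZ, hcardS] at h1
    have hq1' : (((q - 1 : ℕ) : K)) = -1 := by
      rw [Nat.cast_sub (le_of_lt hq1), Nat.cast_one, hqdef,
        FiniteField.cast_card_eq_zero, zero_sub]
    rw [Nat.cast_add, Nat.cast_mul, Nat.cast_one, hq1', neg_add, neg_mul, neg_neg,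
      one_mul] at h1
    rw [← h1]
    ring
  have hmod : (Nat.card T ≡ 1 [MOD p]) ↔ c = 0 := by
    constructor
    · intro h
      have hcast : ((N : K) - 1) = 0 := by
        have : ((N : ℕ) : K) = ((1 : ℕ) : K) := (CharP.natCast_eq_natCast K p).mpr h
        rw [this, Nat.cast_one, sub_self]
      rw [hNK] at hcast
      rcases mul_eq_zero.mp hcast with h' | h'
      · exact absurd h' (pow_ne_zero _ (neg_ne_zero.mpr one_ne_zero))
      · exact h'
    · intro h
      have hcast : ((N : K) - 1) = 0 := by rw [hNK, h, mul_zero]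
      refine (CharP.natCast_eq_natCast K p).mp ?_
      rw [Nat.cast_one]
      linear_combination hcast
  rw [hmod]
end

section
/- Let p be a prime and let d ≥ 1 be a divisor of p−1. In the polynomial ring 𝔽_p[x_0, …, x_{d−1}] over the field with p elements, the coefficient of the monomial (x_0 x_1 ⋯ x_{d−1})^{p−1} in the power (x_0^d + x_1^d + ⋯ + x_{d−1}^d)^{p−1} is nonzero. -/
open MvPolynomial

/-- For a prime `p` and a divisor `d ≥ 1` of `p - 1`, the coefficient of
`(x_0 ⋯ x_{d-1})^(p-1)` in `(x_0^d + ⋯ + x_{d-1}^d)^(p-1)` is nonzero in `𝔽_p`. -/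
theorem coeff_fermat_pow_ne_zero (p d : ℕ) (hp : p.Prime) (hd : 1 ≤ d)
    (hdvd : d ∣ p - 1) :
    coeff (Finsupp.equivFunOnFinite.symm fun _ : Fin d => p - 1)
        ((∑ i : Fin d, (X i : MvPolynomial (Fin d) (ZMod p)) ^ d) ^ (p - 1)) ≠ 0 := by
  classical
  obtain ⟨m, hm⟩ := hdvd
  set k₀ : Fin d → ℕ := fun _ => m with hk₀
  have hsum_single : ∀ c : Fin d → ℕ,
      (∑ i : Fin d, Finsupp.single i (c i)) = Finsupp.equivFunOnFinite.symm c := by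
    intro c
    ext j
    simp [Finsupp.finset_sum_apply, Finsupp.single_apply]
  have hprod : ∀ k : Fin d → ℕ,
      (∏ i : Fin d, ((X i : MvPolynomial (Fin d) (ZMod p)) ^ d) ^ k i)
        = monomial (Finsupp.equivFunOnFinite.symm fun i => d * k i) 1 := by
    intro k
    rw [← hsum_single, monomial_sum_one]
    exact Finset.prod_congr rfl fun i _ => by rw [← pow_mul, X_pow_eq_monomial]
  have hmain : coeff (Finsupp.equivFunOnFinite.symm fun _ : Fin d => p - 1)
        ((∑ i : Fin d, (X i : MvPolynomial (Fin d) (ZMod p)) ^ d) ^ (p - 1))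
      = (Nat.multinomial Finset.univ k₀ : ZMod p) := by
    rw [Finset.sum_pow_eq_sum_piAntidiag, coeff_sum]
    have hterm : ∀ k : Fin d → ℕ,
        coeff (Finsupp.equivFunOnFinite.symm fun _ : Fin d => p - 1)
          ((Nat.multinomial Finset.univ k : MvPolynomial (Fin d) (ZMod p))
            * ∏ i : Fin d, ((X i : MvPolynomial (Fin d) (ZMod p)) ^ d) ^ k i)
        = if (fun i => d * k i) = (fun _ : Fin d => p - 1)
            then (Nat.multinomial Finset.univ k : ZMod p) else 0 := by
      intro k
      rw [hprod, ← map_natCast (C : ZMod p →+* MvPolynomial (Fin d) (ZMod p)),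
        coeff_C_mul, coeff_monomial]
      by_cases h : (fun i => d * k i) = (fun _ : Fin d => p - 1)
      · rw [if_pos h, if_pos (congrArg _ h), mul_one]
      · rw [if_neg h, if_neg (fun he => h (Finsupp.equivFunOnFinite.symm.injective he)), mul_zero]
    rw [Finset.sum_congr rfl fun k _ => hterm k]
    rw [Finset.sum_eq_single k₀]
    · rw [if_pos]
      funext i
      simp [hk₀, ← hm]
    · intro b hb hbne
      rw [if_neg]
      intro h
      apply hbne
      funext i
      have := congrFun h i
      have hd0 : d ≠ 0 := by omega
      simp only [hk₀]
      have : d * b i = d * m := by omega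
      exact Nat.eq_of_mul_eq_mul_left (by omega) this
    · intro h
      exfalso
      apply h
      rw [Finset.mem_piAntidiag]
      refine ⟨?_, fun i _ => Finset.mem_univ i⟩
      simp [hk₀, Finset.sum_const, Finset.card_univ, mul_comm, ← hm]
  rw [hmain]
  intro hzero
  rw [ZMod.natCast_eq_zero_iff] at hzero
  have hdvd2 : Nat.multinomial Finset.univ k₀ ∣ (∑ i : Fin d, k₀ i).factorial :=
    Dvd.intro_left _ (Nat.multinomial_spec _ _)
  have : p ∣ (∑ i : Fin d, k₀ i).factorial := hzero.trans hdvd2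
  rw [Nat.Prime.dvd_factorial hp] at this
  have hsum : (∑ i : Fin d, k₀ i) = p - 1 := by
    simp [hk₀, Finset.sum_const, Finset.card_univ, mul_comm, ← hm]
  rw [hsum] at this
  have := hp.two_le
  omega
end

section
/- Let p be a prime and n ≥ 0 a natural number such that n+1 divides p−1. Then the number of vectors x = (x_0, …, x_n) ∈ 𝔽_p^{n+1} satisfying x_0^{n+1} + x_1^{n+1} + ⋯ + x_n^{n+1} = 0 is not divisible by p. -/
open Finset

/-- Power sum over `ZMod p`. -/
lemma sum_pow_zmod (p : ℕ) [Fact p.Prime] (m : ℕ) (hm : m ≠ 0) :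
    ∑ x : ZMod p, x ^ m = if (p - 1) ∣ m then -1 else 0 := by
  classical
  let K := ZMod p
  let φ : Kˣ ↪ K := ⟨fun x ↦ x, fun _ _ h => Units.ext h⟩
  have huniv : univ.map φ = univ \ {(0 : K)} := by
    ext x
    simp only [mem_map, mem_univ, Function.Embedding.coeFn_mk, true_and, mem_sdiff,
      mem_singleton, φ]; exact isUnit_iff_ne_zero
  calc
    ∑ x : K, x ^ m = ∑ x ∈ univ \ {(0 : K)}, x ^ m := by
      rw [← sum_sdiff (({0} : Finset K).subset_univ), sum_singleton, zero_pow hm, add_zero]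
    _ = ∑ x : Kˣ, (x : K) ^ m := by simp [φ, ← huniv, univ.sum_map φ]; rfl
    _ = if (p - 1) ∣ m then -1 else 0 := by
      have := FiniteField.sum_pow_units K m
      rwa [ZMod.card p] at this

/-- For a prime `p` with `n + 1 ∣ p - 1`, the number of solutions of
`x_0^(n+1) + ⋯ + x_n^(n+1) = 0` in `𝔽_p^(n+1)` is not divisible by `p`. -/
theorem fermat_affine_point_count_not_dvd (p n : ℕ) (hp : p.Prime)
    (hdvd : (n + 1) ∣ p - 1) :
    ¬ p ∣ Nat.card {x : Fin (n + 1) → ZMod p // ∑ i : Fin (n + 1), x i ^ (n + 1) = 0} := by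
  classical
  haveI : Fact p.Prime := ⟨hp⟩
  set K := ZMod p
  set d := (p - 1) / (n + 1) with hd
  have hpd : (n + 1) * d = p - 1 := Nat.mul_div_cancel' hdvd
  have hp1 : p - 1 ≠ 0 := by
    have := hp.two_le; omega
  have hdpos : d ≠ 0 := by
    rintro h0; rw [h0, mul_zero] at hpd; exact hp1 hpd.symm
  -- the multinomial coefficient
  set C : ℕ := Nat.multinomial (univ : Finset (Fin (n + 1))) (fun _ => d) with hC
  have hCne : ¬ p ∣ C := by
    intro hdvdC
    have hspec := Nat.multinomial_spec (univ : Finset (Fin (n + 1))) (fun _ => d)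
    have hsum : ∑ _i : Fin (n + 1), d = p - 1 := by
      rw [Finset.sum_const, card_univ, Fintype.card_fin, smul_eq_mul, hpd]
    rw [hsum] at hspec
    have h1 : p ∣ (p - 1).factorial := by
      rw [← hspec]; exact Dvd.dvd.mul_left hdvdC _
    rw [Nat.Prime.dvd_factorial hp] at h1
    omega
  -- abbreviation for the defining polynomial
  set f : (Fin (n + 1) → K) → K := fun x => ∑ i : Fin (n + 1), x i ^ (n + 1) with hf
  -- count as a sum of indicators
  have hcard : (Nat.card {x : Fin (n + 1) → K // f x = 0} : K)
      = ∑ x : Fin (n + 1) → K, (if f x = 0 then (1 : K) else 0) := by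
    rw [Nat.card_eq_fintype_card, Fintype.card_subtype, Finset.sum_boole]
  -- indicator = 1 - f x ^ (p-1)
  have hind : ∀ x : Fin (n + 1) → K, (if f x = 0 then (1 : K) else 0) = 1 - f x ^ (p - 1) := by
    intro x
    by_cases h : f x = 0
    · rw [if_pos h, h, zero_pow hp1, sub_zero]
    · rw [if_neg h, ZMod.pow_card_sub_one_eq_one h, sub_self]
  -- main computation
  have hS : ∑ x : Fin (n + 1) → K, f x ^ (p - 1) = (C : K) * (-1 : K) ^ (n + 1) := by
    have expand : ∀ x : Fin (n + 1) → K, f x ^ (p - 1)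
        = ∑ k ∈ piAntidiag (univ : Finset (Fin (n + 1))) (p - 1),
            (Nat.multinomial univ k : K) * ∏ i, x i ^ ((n + 1) * k i) := by
      intro x
      rw [hf]
      rw [Finset.sum_pow_eq_sum_piAntidiag (univ : Finset (Fin (n + 1)))
        (fun i => x i ^ (n + 1)) (p - 1)]
      refine Finset.sum_congr rfl fun k _ => ?_
      congr 1
      exact Finset.prod_congr rfl fun i _ => by rw [← pow_mul]
    calc
      ∑ x : Fin (n + 1) → K, f x ^ (p - 1)
          = ∑ k ∈ piAntidiag (univ : Finset (Fin (n + 1))) (p - 1),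
              (Nat.multinomial univ k : K) * ∏ i, ∑ y : K, y ^ ((n + 1) * k i) := by
        simp_rw [expand]
        rw [Finset.sum_comm]
        refine Finset.sum_congr rfl fun k _ => ?_
        rw [← Finset.mul_sum]
        congr 1
        rw [Finset.prod_univ_sum, Fintype.piFinset_univ]
      _ = (C : K) * (-1 : K) ^ (n + 1) := by
        have hfac : (∑ y : K, y ^ ((n + 1) * d)) = -1 := by
          rw [sum_pow_zmod p _ (by positivity), if_pos (hpd ▸ dvd_refl _)]
        have hvanish : ∀ k ∈ piAntidiag (univ : Finset (Fin (n + 1))) (p - 1),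
            k ≠ (fun _ => d) →
            (Nat.multinomial univ k : K) * ∏ i, ∑ y : K, y ^ ((n + 1) * k i) = 0 := by
          intro k hk hkne
          rw [Finset.mem_piAntidiag] at hk
          -- show the product vanishes
          have : ∃ i, (∑ y : K, y ^ ((n + 1) * k i)) = 0 := by
            by_contra hno
            push_neg at hno
            have hge : ∀ i, d ≤ k i := by
              intro i
              have hne := hno i
              by_cases h0 : k i = 0
              · exfalso
                apply hne
                rw [h0, mul_zero]
                simp only [pow_zero]
                rw [Finset.sum_const, card_univ, ZMod.card]
                simp [ZMod.natCast_self]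
              have hddvd : (p - 1) ∣ (n + 1) * k i := by
                by_contra hnd
                exact hne (by rw [sum_pow_zmod p _ (by positivity), if_neg hnd])
              have : p - 1 ≤ (n + 1) * k i := Nat.le_of_dvd (by positivity) hddvd
              rw [← hpd] at this
              exact Nat.le_of_mul_le_mul_left this (Nat.succ_pos n)
            have hlt : ∃ j, d < k j := by
              by_contra hno2
              push_neg at hno2
              exact hkne (funext fun i => le_antisymm (hno2 i) (hge i))
            obtain ⟨j, hj⟩ := hlt
            have : ∑ _i : Fin (n + 1), d < ∑ i, k i :=
              Finset.sum_lt_sum (fun i _ => hge i) ⟨j, Finset.mem_univ j, hj⟩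
            rw [Finset.sum_const, card_univ, Fintype.card_fin, smul_eq_mul, hpd, hk.1] at this
            omega
          obtain ⟨i, hi⟩ := this
          rw [Finset.prod_eq_zero (Finset.mem_univ i) hi, mul_zero]
        have hmem : (fun _ : Fin (n + 1) => d) ∈ piAntidiag (univ : Finset (Fin (n + 1))) (p - 1) := by
          rw [Finset.mem_piAntidiag]
          refine ⟨?_, fun i _ => Finset.mem_univ i⟩
          rw [Finset.sum_const, card_univ, Fintype.card_fin, smul_eq_mul, hpd]
        rw [Finset.sum_eq_single_of_mem _ hmem hvanish]
        simp only [hfac, Finset.prod_const, card_univ, Fintype.card_fin]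
        rw [hC]
  -- conclude
  intro hpd2
  have hzero : (Nat.card {x : Fin (n + 1) → K // f x = 0} : K) = 0 :=
    (ZMod.natCast_eq_zero_iff _ p).mpr hpd2
  rw [hcard] at hzero
  simp_rw [hind] at hzero
  rw [Finset.sum_sub_distrib, Finset.sum_const, card_univ, hS] at hzero
  have hcardK : ((Fintype.card (Fin (n + 1) → K)) : K) = 0 := by
    rw [Fintype.card_fun, ZMod.card, Fintype.card_fin]
    simp [ZMod.natCast_self]
  rw [nsmul_eq_mul, mul_one, Fintype.card_fun, ZMod.card, Fintype.card_fin] at hzero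
  have hp0 : ((p : K) ^ (n + 1)) = 0 := by
    rw [ZMod.natCast_self, zero_pow (Nat.succ_ne_zero n)]
  rw [Nat.cast_pow, hp0, zero_sub, neg_eq_zero, mul_eq_zero] at hzero
  rcases hzero with h | h
  · exact hCne ((ZMod.natCast_eq_zero_iff _ p).mp h)
  · exact pow_ne_zero _ (neg_ne_zero.mpr one_ne_zero) h
end
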